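/- Let n ≥ 1, let L be a symmetric positive semimidefinite real n × n matrix with L𝟙 = 0 (where 𝟙 is the all-ones vector), let D be a diagonal matrix with strictly positive diagonal entries d_u, and let φ > 0. Suppose that for all x ∈ ℝ^n with xᵀD𝟙 = 0 one has xᵀLx ≥ (φ²/2)·xᵀDx. Then for every b ∈ ℝ^n with bᵀ𝟙 = 0 and every x ∈ ℝ^n with Lx = b, one has bᵀx ≤ 2φ^{-2}·Σ_u b_u²/d_u. -/

import Mathlib

open Finset Matrix

/-- Electrical-energy bound from a spectral gap (Cheeger-type hypothesis): if `L` is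
symmetric PSD with `L𝟙 = 0` and `xᵀLx ≥ (φ²/2) xᵀDx` for all `x` with `xᵀD𝟙 = 0`,
then for every demand `b ⊥ 𝟙` and every `x` with `Lx = b`, the electrical energy
satisfies `bᵀx ≤ 2 φ⁻² Σ_u b_u²/d_u`. -/
theorem electrical_energy_bound (n : ℕ) (hn : 1 ≤ n)
    (L : Matrix (Fin n) (Fin n) ℝ) (hL : L.PosSemidef)
    (hL1 : L.mulVec (fun _ => (1 : ℝ)) = 0)
    (d : Fin n → ℝ) (hd : ∀ u, 0 < d u)
    (φ : ℝ) (hφ : 0 < φ)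
    (hgap : ∀ x : Fin n → ℝ, (∑ u, x u * d u) = 0 →
      φ ^ 2 / 2 * ∑ u, d u * x u ^ 2 ≤ x ⬝ᵥ L.mulVec x) :
    ∀ b : Fin n → ℝ, (∑ u, b u) = 0 →
      ∀ x : Fin n → ℝ, L.mulVec x = b →
        b ⬝ᵥ x ≤ 2 / φ ^ 2 * ∑ u, b u ^ 2 / d u := by
  intro b hb x hLx
  have hs : (0:ℝ) < ∑ u, d u := by
    apply Finset.sum_pos (fun u _ => hd u)
    exact Finset.univ_nonempty_iff.mpr (Fin.pos_iff_nonempty.mp hn)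
  set s : ℝ := ∑ u, d u with hs_def
  set c : ℝ := (∑ u, x u * d u) / s with hc
  set y : Fin n → ℝ := x - c • (fun _ => (1:ℝ)) with hy
  have hyu : ∀ u, y u = x u - c := fun u => by simp [hy]
  -- y is D-orthogonal to 1
  have hyD : (∑ u, y u * d u) = 0 := by
    simp only [hyu, sub_mul]
    rw [Finset.sum_sub_distrib, ← Finset.mul_sum]
    rw [hc, ← hs_def, div_mul_cancel₀ _ hs.ne', sub_self]
  -- L y = b
  have hLy : L.mulVec y = b := by
    rw [hy, Matrix.mulVec_sub, Matrix.mulVec_smul, hL1, smul_zero, sub_zero, hLx]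
  -- b ⬝ x = b ⬝ y
  have hbx : b ⬝ᵥ x = b ⬝ᵥ y := by
    simp only [dotProduct, hyu, mul_sub]
    rw [Finset.sum_sub_distrib, ← Finset.sum_mul, hb]
    ring
  set E : ℝ := b ⬝ᵥ y with hE
  set Q : ℝ := ∑ u, d u * y u ^ 2 with hQ
  set S : ℝ := ∑ u, b u ^ 2 / d u with hS
  have hQnn : 0 ≤ Q := Finset.sum_nonneg fun u _ =>
    mul_nonneg (hd u).le (sq_nonneg _)
  have hSnn : 0 ≤ S := Finset.sum_nonneg fun u _ =>
    div_nonneg (sq_nonneg _) (hd u).le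
  -- energy lower bound from the gap
  have hEQ : φ ^ 2 / 2 * Q ≤ E := by
    have := hgap y hyD
    rwa [hLy, dotProduct_comm] at this
  -- Cauchy–Schwarz: E^2 ≤ S * Q
  have hCS : E ^ 2 ≤ S * Q := by
    have key := Finset.sum_mul_sq_le_sq_mul_sq Finset.univ
      (fun u => b u / Real.sqrt (d u)) (fun u => Real.sqrt (d u) * y u)
    have e1 : ∀ u : Fin n, b u / Real.sqrt (d u) * (Real.sqrt (d u) * y u) = b u * y u := by
      intro u
      have : Real.sqrt (d u) ≠ 0 := ne_of_gt (Real.sqrt_pos.mpr (hd u))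
      field_simp
    have e2 : ∀ u : Fin n, (b u / Real.sqrt (d u)) ^ 2 = b u ^ 2 / d u := by
      intro u
      rw [div_pow, Real.sq_sqrt (hd u).le]
    have e3 : ∀ u : Fin n, (Real.sqrt (d u) * y u) ^ 2 = d u * y u ^ 2 := by
      intro u
      rw [mul_pow, Real.sq_sqrt (hd u).le]
    simp only [e1, e2, e3] at key
    have hEd : E = ∑ u, b u * y u := rfl
    rw [hE, hS, hQ]
    simpa [dotProduct] using key
  have hEnn : 0 ≤ E := le_trans (by positivity) hEQ
  rw [hbx]
  show E ≤ 2 / φ ^ 2 * S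
  rcases eq_or_lt_of_le hEnn with h0 | hpos
  · rw [← h0]; positivity
  · rw [div_mul_eq_mul_div, le_div_iff₀ (by positivity : (0:ℝ) < φ ^ 2)]
    nlinarith [mul_le_mul_of_nonneg_left hEQ hSnn, hCS, hpos, sq_nonneg φ,
      mul_pos hpos hpos]
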